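/- Let z = [[x, y], [y, w]] ∈ Sym₂(ℚ_p) and assume: 𝐯(y) ≤ 1; if 𝐯(y) = 0 then x ∉ ℤ_p and w ∉ pℤ_p; if 𝐯(y) = 1 and 𝐯(w) = 0 then (𝐯(x) ≥ 3 implies w ∈ ℤ_pˣ) and (𝐯(x) ≤ 2 implies w = 0); if 𝐯(y) = 1 and 𝐯(x) ≤ 1 then (𝐯(w) ≥ 2 implies 𝐯(x) = 1) and (𝐯(w) ≤ 1 implies x = 0). Then z is invertible, and w_s·n(z) belongs to the product of sets N₂ · Z₂ · d(det z) · t(z·J₁) · K(p). (This is Lemma 4.2 of Hsieh–Yamana.) -/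

import Mathlib

open Matrix

/-- `J = [[0, 1₂], [−1₂, 0]]` defining `GSp₄`. -/
noncomputable def GSp4J (p : ℕ) [Fact p.Prime] : Matrix (Fin 4) (Fin 4) ℚ_[p] :=
  !![0, 0, 1, 0;
     0, 0, 0, 1;
     -1, 0, 0, 0;
     0, -1, 0, 0]

/-- `n(Z) = [[1₂, Z], [0, 1₂]]`. -/
noncomputable def nMat (p : ℕ) [Fact p.Prime] (Z : Matrix (Fin 2) (Fin 2) ℚ_[p]) :
    Matrix (Fin 4) (Fin 4) ℚ_[p] :=
  !![1, 0, Z 0 0, Z 0 1;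
     0, 1, Z 1 0, Z 1 1;
     0, 0, 1, 0;
     0, 0, 0, 1]

/-- `t(A) = [[A, 0], [0, (det A)·(Aᵀ)⁻¹]]`. -/
noncomputable def tMat (p : ℕ) [Fact p.Prime] (A : Matrix (Fin 2) (Fin 2) ℚ_[p]) :
    Matrix (Fin 4) (Fin 4) ℚ_[p] :=
  !![A 0 0, A 0 1, 0, 0;
     A 1 0, A 1 1, 0, 0;
     0, 0, (A.det • (Aᵀ)⁻¹) 0 0, (A.det • (Aᵀ)⁻¹) 0 1;
     0, 0, (A.det • (Aᵀ)⁻¹) 1 0, (A.det • (Aᵀ)⁻¹) 1 1]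

/-- `d(λ) = diag(1, 1, λ, λ)`. -/
noncomputable def dMat (p : ℕ) [Fact p.Prime] (l : ℚ_[p]) : Matrix (Fin 4) (Fin 4) ℚ_[p] :=
  !![1, 0, 0, 0;
     0, 1, 0, 0;
     0, 0, l, 0;
     0, 0, 0, l]

/-- `J₁ = [[0, 1], [−1, 0]]`. -/
noncomputable def J1Mat (p : ℕ) [Fact p.Prime] : Matrix (Fin 2) (Fin 2) ℚ_[p] :=
  !![0, 1; -1, 0]

/-- The Weyl element `w_s` with rows `(0,0,0,1), (0,0,−1,0), (0,−1,0,0), (1,0,0,0)`. -/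
noncomputable def wsMat (p : ℕ) [Fact p.Prime] : Matrix (Fin 4) (Fin 4) ℚ_[p] :=
  !![0, 0, 0, 1;
     0, 0, -1, 0;
     0, -1, 0, 0;
     1, 0, 0, 0]

/-- The paramodular group `K(p)` of level `p`: elements of `GSp₄(ℚ_p)` with
similitude factor in `ℤ_pˣ`, entry (1,3) in `p⁻¹ℤ_p`, entries (2,1), (3,1),
(3,2), (3,4), (4,1) in `pℤ_p`, and all remaining entries in `ℤ_p`
(matrix positions written 1-based). -/
def InParamodular (p : ℕ) [Fact p.Prime] (k : Matrix (Fin 4) (Fin 4) ℚ_[p]) : Prop :=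
  (∃ l : ℚ_[p], ‖l‖ = 1 ∧ k * GSp4J p * kᵀ = l • GSp4J p) ∧
    ‖k 0 2‖ ≤ p ∧
    ‖k 1 0‖ < 1 ∧ ‖k 2 0‖ < 1 ∧ ‖k 2 1‖ < 1 ∧ ‖k 2 3‖ < 1 ∧ ‖k 3 0‖ < 1 ∧
    ‖k 0 0‖ ≤ 1 ∧ ‖k 0 1‖ ≤ 1 ∧ ‖k 0 3‖ ≤ 1 ∧ ‖k 1 1‖ ≤ 1 ∧ ‖k 1 2‖ ≤ 1 ∧
    ‖k 1 3‖ ≤ 1 ∧ ‖k 2 2‖ ≤ 1 ∧ ‖k 3 1‖ ≤ 1 ∧ ‖k 3 2‖ ≤ 1 ∧ ‖k 3 3‖ ≤ 1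

/-- `𝐯(t) = max(0, −v_p(t))` for `t ≠ 0`, and `𝐯(0) = 0`. -/
noncomputable def vLevel (p : ℕ) [Fact p.Prime] (t : ℚ_[p]) : ℤ :=
  open scoped Classical in
  if t = 0 then 0 else max 0 (-t.valuation)

section
variable {p : ℕ} [Fact p.Prime]

private lemma HY_norm_sub {a b : ℚ_[p]} (h : ‖b‖ < ‖a‖) : ‖a - b‖ = ‖a‖ := by
  rw [sub_eq_add_neg, Padic.add_eq_max_of_ne (by rw [norm_neg]; exact (ne_of_lt h).symm),
    norm_neg, max_eq_left h.le]

private lemma HY_vL_nonneg (t : ℚ_[p]) : 0 ≤ vLevel p t := by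
  unfold vLevel; split
  · exact le_refl 0
  · exact le_max_left _ _

private lemma HY_vL_le (t : ℚ_[p]) (n : ℕ) : vLevel p t ≤ (n : ℤ) ↔ ‖t‖ ≤ (p : ℝ) ^ (n : ℕ) := by
  have hp1 : (1:ℝ) < p := by exact_mod_cast (Fact.out : p.Prime).one_lt
  unfold vLevel
  split
  · next h =>
    subst h
    simp only [norm_zero]
    constructor
    · intro _; positivity
    · intro _; exact Int.ofNat_nonneg n
  · next h =>
    rw [Padic.norm_eq_zpow_neg_valuation h, ← zpow_natCast (p:ℝ) n, zpow_le_zpow_iff_right₀ hp1,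
      max_le_iff]
    omega

private lemma HY_vL_ge (t : ℚ_[p]) (n : ℕ) (hn : 1 ≤ n) :
    (n : ℤ) ≤ vLevel p t ↔ (p : ℝ) ^ (n : ℕ) ≤ ‖t‖ := by
  have hp1 : (1:ℝ) < p := by exact_mod_cast (Fact.out : p.Prime).one_lt
  unfold vLevel
  split
  · next h =>
    subst h
    simp only [norm_zero]
    constructor
    · intro h'; exact absurd h' (by omega)
    · intro h'; exact absurd h' (not_le.mpr (by positivity))
  · next h =>
    rw [Padic.norm_eq_zpow_neg_valuation h, ← zpow_natCast (p:ℝ) n, zpow_le_zpow_iff_right₀ hp1,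
      le_max_iff]
    omega

private lemma HY_key (x y w : ℚ_[p])
    (hy : vLevel p y ≤ 1)
    (h0 : vLevel p y = 0 → ¬ ‖x‖ ≤ 1 ∧ ¬ ‖w‖ < 1)
    (h1 : vLevel p y = 1 → vLevel p w = 0 →
      (3 ≤ vLevel p x → ‖w‖ = 1) ∧ (vLevel p x ≤ 2 → w = 0))
    (h2 : vLevel p y = 1 → vLevel p x ≤ 1 →
      (2 ≤ vLevel p w → vLevel p x = 1) ∧ (vLevel p w ≤ 1 → x = 0)) :
    ‖y‖ < ‖x*w - y*y‖ ∧ ‖w‖ < ‖x*w - y*y‖ ∧ ‖x‖ ≤ ‖x*w - y*y‖ := by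
  have hp1 : (1:ℝ) < p := by exact_mod_cast (Fact.out : p.Prime).one_lt
  have hp0 : (0:ℝ) < p := lt_trans one_pos hp1
  by_cases hy1 : ‖y‖ ≤ 1
  · obtain ⟨hx, hw⟩ := h0 (le_antisymm ((HY_vL_le y 0).mpr (by simpa using hy1)) (HY_vL_nonneg y))
    rw [not_le] at hx; rw [not_lt] at hw
    have hyy : ‖y*y‖ < ‖x*w‖ := by rw [norm_mul, norm_mul]; nlinarith [norm_nonneg y]
    have hD : ‖x*w - y*y‖ = ‖x‖ * ‖w‖ := by rw [HY_norm_sub hyy, norm_mul]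
    rw [hD]
    refine ⟨by nlinarith, by nlinarith, by nlinarith⟩
  · have hvy1 : vLevel p y = 1 := by
      by_contra hc
      have hle : vLevel p y ≤ ((0:ℕ):ℤ) := by have := HY_vL_nonneg y; omega
      exact hy1 (by simpa using (HY_vL_le y 0).mp hle)
    have hyp : ‖y‖ = p := by
      have hle : ‖y‖ ≤ (p:ℝ)^(1:ℕ) := (HY_vL_le y 1).mp (by omega)
      have hge : (p:ℝ)^(1:ℕ) ≤ ‖y‖ := (HY_vL_ge y 1 le_rfl).mp (by omega)
      rw [pow_one] at hle hge; exact le_antisymm hle hge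
    by_cases hw0 : vLevel p w = 0
    · obtain ⟨hc1, hc2⟩ := h1 hvy1 hw0
      by_cases hx2 : vLevel p x ≤ 2
      · have hw' : w = 0 := hc2 hx2
        have hx' : ‖x‖ ≤ (p:ℝ)^(2:ℕ) := (HY_vL_le x 2).mp hx2
        have hD : ‖x*w - y*y‖ = (p:ℝ)^(2:ℕ) := by
          rw [hw', mul_zero, zero_sub, norm_neg, norm_mul, hyp]; ring
        rw [hD, hw', hyp, norm_zero]
        refine ⟨by nlinarith, by nlinarith, hx'⟩
      · have hw1 : ‖w‖ = 1 := hc1 (by omega)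
        have hx' : (p:ℝ)^(3:ℕ) ≤ ‖x‖ := (HY_vL_ge x 3 (by norm_num)).mp (by omega)
        have hpp3 : (p:ℝ)*(p:ℝ) < (p:ℝ)^(3:ℕ) := by
          nlinarith [mul_pos (mul_pos hp0 hp0) (sub_pos.mpr hp1)]
        have hyy : ‖y*y‖ < ‖x*w‖ := by rw [norm_mul, norm_mul, hyp, hw1]; nlinarith
        have hD : ‖x*w - y*y‖ = ‖x‖ := by rw [HY_norm_sub hyy, norm_mul, hw1, mul_one]
        rw [hD, hyp, hw1]
        refine ⟨by nlinarith, by nlinarith, le_rfl⟩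
    · have hwp : (p:ℝ) ≤ ‖w‖ := by
        have := (HY_vL_ge w 1 le_rfl).mp (by have := HY_vL_nonneg w; omega)
        rwa [pow_one] at this
      by_cases hx1 : vLevel p x ≤ 1
      · obtain ⟨hc1, hc2⟩ := h2 hvy1 hx1
        by_cases hw2 : vLevel p w ≤ 1
        · have hx0 : x = 0 := hc2 hw2
          have hwle : ‖w‖ ≤ (p:ℝ) := by
            have := (HY_vL_le w 1).mp hw2; rwa [pow_one] at this
          have hD : ‖x*w - y*y‖ = (p:ℝ)^(2:ℕ) := by
            rw [hx0, zero_mul, zero_sub, norm_neg, norm_mul, hyp]; ring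
          rw [hD, hx0, hyp, norm_zero]
          refine ⟨by nlinarith, by nlinarith, by nlinarith⟩
        · have hx1' : vLevel p x = 1 := hc1 (by omega)
          have hxp : ‖x‖ = p := by
            have hle : ‖x‖ ≤ (p:ℝ)^(1:ℕ) := (HY_vL_le x 1).mp (by omega)
            have hge : (p:ℝ)^(1:ℕ) ≤ ‖x‖ := (HY_vL_ge x 1 le_rfl).mp (by omega)
            rw [pow_one] at hle hge; exact le_antisymm hle hge
          have hwp2 : (p:ℝ)^(2:ℕ) ≤ ‖w‖ := (HY_vL_ge w 2 (by norm_num)).mp (by omega)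
          have hyy : ‖y*y‖ < ‖x*w‖ := by rw [norm_mul, norm_mul, hyp, hxp]; nlinarith
          have hD : ‖x*w - y*y‖ = (p:ℝ) * ‖w‖ := by rw [HY_norm_sub hyy, norm_mul, hxp]
          rw [hD, hyp, hxp]
          refine ⟨by nlinarith, by nlinarith, by nlinarith⟩
      · have hxp2 : (p:ℝ)^(2:ℕ) ≤ ‖x‖ := (HY_vL_ge x 2 (by norm_num)).mp (by omega)
        have hA : (p:ℝ)^(2:ℕ)*(p:ℝ) ≤ ‖x‖ * ‖w‖ := mul_le_mul hxp2 hwp hp0.le (norm_nonneg x)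
        have hB : (0:ℝ) < (p:ℝ)*(p:ℝ)*((p:ℝ)-1) := mul_pos (mul_pos hp0 hp0) (sub_pos.mpr hp1)
        have hyy : ‖y*y‖ < ‖x*w‖ := by
          rw [norm_mul, norm_mul, hyp]
          nlinarith [hA, hB]
        have hD : ‖x*w - y*y‖ = ‖x‖ * ‖w‖ := by rw [HY_norm_sub hyy, norm_mul]
        rw [hD, hyp]
        have hx1'' : (1:ℝ) < ‖x‖ := by nlinarith
        have hw0'' : (0:ℝ) < ‖w‖ := lt_of_lt_of_le hp0 hwp
        have hw1'' : (1:ℝ) ≤ ‖w‖ := le_trans hp1.le hwp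
        refine ⟨by nlinarith [hA, hB], 
          by nlinarith [mul_lt_mul_of_pos_right hx1'' hw0''],
          by nlinarith [mul_le_mul_of_nonneg_left hw1'' (norm_nonneg x)]⟩

end

set_option maxHeartbeats 4000000 in
/-- Lemma 4.2 of Hsieh–Yamana: under the stated congruence conditions on the
entries of `z = [[x, y], [y, w]]`, the matrix `z` is invertible and
`w_s · n(z) ∈ N₂ · Z₂ · d(det z) · t(z·J₁) · K(p)`. -/
theorem hsieh_yamana_lemma_4_2
    (p : ℕ) [Fact p.Prime] (x y w : ℚ_[p])
    (z : Matrix (Fin 2) (Fin 2) ℚ_[p]) (hz : z = !![x, y; y, w])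
    (hy : vLevel p y ≤ 1)
    (h0 : vLevel p y = 0 → ¬ ‖x‖ ≤ 1 ∧ ¬ ‖w‖ < 1)
    (h1 : vLevel p y = 1 → vLevel p w = 0 →
      (3 ≤ vLevel p x → ‖w‖ = 1) ∧ (vLevel p x ≤ 2 → w = 0))
    (h2 : vLevel p y = 1 → vLevel p x ≤ 1 →
      (2 ≤ vLevel p w → vLevel p x = 1) ∧ (vLevel p w ≤ 1 → x = 0)) :
    IsUnit z ∧
      ∃ u : Matrix (Fin 2) (Fin 2) ℚ_[p], uᵀ = u ∧
        ∃ l : ℚ_[p], l ≠ 0 ∧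
          ∃ k : Matrix (Fin 4) (Fin 4) ℚ_[p], InParamodular p k ∧
            wsMat p * nMat p z =
              nMat p u * (l • (1 : Matrix (Fin 4) (Fin 4) ℚ_[p])) *
                dMat p z.det * tMat p (z * J1Mat p) * k := by
  subst hz
  obtain ⟨hky, hkw, hkx⟩ := HY_key x y w hy h0 h1 h2
  have hD0 : x*w - y*y ≠ 0 := by
    intro h
    rw [h, norm_zero] at hky
    exact absurd hky (not_lt.mpr (norm_nonneg y))
  set D := x*w - y*y with hDdef
  have hD0' : x*w - y*y ≠ 0 := by rw [← hDdef]; exact hD0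
  have hDpos : (0:ℝ) < ‖D‖ := norm_pos_iff.mpr hD0
  have hdet : (!![x,y;y,w] : Matrix (Fin 2) (Fin 2) ℚ_[p]).det = D := by
    rw [Matrix.det_fin_two_of, hDdef]
  have hp0 : (0:ℝ) ≤ p := by positivity
  refine ⟨(Matrix.isUnit_iff_isUnit_det _).mpr (by rw [hdet]; exact isUnit_iff_ne_zero.mpr hD0),
    !![-(x/D), -(y/D); -(y/D), -(w/D)], ?_, D⁻¹, inv_ne_zero hD0,
    !![-1,0,0,0; 0,-1,0,0; -(w/D), y/D, -1, 0; y/D, -(x/D), 0, -1], ⟨⟨1, norm_one, ?_⟩,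
      ?_, ?_, ?_, ?_, ?_, ?_, ?_, ?_, ?_, ?_, ?_, ?_, ?_, ?_, ?_, ?_⟩, ?_⟩
  -- u symmetric
  · ext i j; fin_cases i <;> fin_cases j <;> rfl
  -- similitude
  · rw [one_smul]
    ext i j
    fin_cases i <;> fin_cases j <;>
      (simp [GSp4J, Matrix.mul_apply, Matrix.transpose_apply, Fin.sum_univ_four,
        Matrix.cons_val_two, Matrix.cons_val_three, Matrix.vecHead, Matrix.vecTail]; try ring)
  -- norm bounds
  · show ‖(0:ℚ_[p])‖ ≤ p; rw [norm_zero]; exact hp0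
  · show ‖(0:ℚ_[p])‖ < 1; rw [norm_zero]; norm_num
  · show ‖-(w/D)‖ < 1; rw [norm_neg, norm_div]; exact (div_lt_one hDpos).mpr hkw
  · show ‖y/D‖ < 1; rw [norm_div]; exact (div_lt_one hDpos).mpr hky
  · show ‖(0:ℚ_[p])‖ < 1; rw [norm_zero]; norm_num
  · show ‖y/D‖ < 1; rw [norm_div]; exact (div_lt_one hDpos).mpr hky
  · show ‖(-1:ℚ_[p])‖ ≤ 1; rw [norm_neg, norm_one]
  · show ‖(0:ℚ_[p])‖ ≤ 1; rw [norm_zero]; norm_num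
  · show ‖(0:ℚ_[p])‖ ≤ 1; rw [norm_zero]; norm_num
  · show ‖(-1:ℚ_[p])‖ ≤ 1; rw [norm_neg, norm_one]
  · show ‖(0:ℚ_[p])‖ ≤ 1; rw [norm_zero]; norm_num
  · show ‖(0:ℚ_[p])‖ ≤ 1; rw [norm_zero]; norm_num
  · show ‖(-1:ℚ_[p])‖ ≤ 1; rw [norm_neg, norm_one]
  · show ‖-(x/D)‖ ≤ 1; rw [norm_neg, norm_div]; exact (div_le_one hDpos).mpr hkx
  · show ‖(0:ℚ_[p])‖ ≤ 1; rw [norm_zero]; norm_num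
  · show ‖(-1:ℚ_[p])‖ ≤ 1; rw [norm_neg, norm_one]
  -- the matrix identity
  · have hA : (!![x,y;y,w] : Matrix (Fin 2) (Fin 2) ℚ_[p]) * J1Mat p = !![-y,x;-w,y] := by
      ext i j
      fin_cases i <;> fin_cases j <;>
        (simp [J1Mat, Matrix.mul_apply, Fin.sum_univ_two]; try ring)
    have hT : tMat p ((!![x,y;y,w] : Matrix (Fin 2) (Fin 2) ℚ_[p]) * J1Mat p)
        = !![-y,x,0,0;-w,y,0,0;0,0,y,w;0,0,-x,-y] := by
      rw [hA]
      have ht2 : (!![-y,x;-w,y] : Matrix (Fin 2) (Fin 2) ℚ_[p])ᵀ = !![-y,-w;x,y] := by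
        ext i j; fin_cases i <;> fin_cases j <;> rfl
      have hinv : (!![-y,-w;x,y] : Matrix (Fin 2) (Fin 2) ℚ_[p])⁻¹
          = (x*w - y*y)⁻¹ • !![y, w; -x, -y] := by
        apply Matrix.inv_eq_right_inv
        ext i j
        fin_cases i <;> fin_cases j <;>
          (simp [Matrix.mul_apply, Fin.sum_univ_two, smul_eq_mul, Matrix.one_apply];
           field_simp [hD0', show x*w - y^2 ≠ 0 from by rwa [sq],
               show -y^2 + x*w ≠ 0 from by rw [sq, neg_add_eq_sub]; exact hD0']; try ring)
      have hsc : (!![-y,x;-w,y] : Matrix (Fin 2) (Fin 2) ℚ_[p]).det •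
          ((!![-y,x;-w,y] : Matrix (Fin 2) (Fin 2) ℚ_[p])ᵀ)⁻¹ = !![y,w;-x,-y] := by
        rw [ht2, hinv, Matrix.det_fin_two_of, smul_smul,
          show ((-y)*y - x*(-w)) * (x*w - y*y)⁻¹ = 1 from by
            rw [show ((-y)*y - x*(-w) : ℚ_[p]) = x*w - y*y from by ring]
            exact mul_inv_cancel₀ hD0', one_smul]
      simp only [tMat, hsc]
      ext i j
      fin_cases i <;> fin_cases j <;> simp
    have hP1 : nMat p (!![-(x/D), -(y/D); -(y/D), -(w/D)] : Matrix (Fin 2) (Fin 2) ℚ_[p]) *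
        dMat p D = !![1,0,-x,-y;0,1,-y,-w;0,0,D,0;0,0,0,D] := by
      ext i j
      fin_cases i <;> fin_cases j <;>
        (simp [nMat, dMat, Matrix.mul_apply, Fin.sum_univ_four,
          Matrix.cons_val_two, Matrix.cons_val_three, Matrix.vecHead, Matrix.vecTail];
         try field_simp)
    have hP2 : (!![1,0,-x,-y;0,1,-y,-w;0,0,D,0;0,0,0,D] : Matrix (Fin 4) (Fin 4) ℚ_[p]) *
        !![-y,x,0,0;-w,y,0,0;0,0,y,w;0,0,-x,-y]
        = !![-y,x,0,-D;-w,y,D,0;0,0,D*y,D*w;0,0,-(D*x),-(D*y)] := by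
      ext i j
      fin_cases i <;> fin_cases j <;>
        (simp [Matrix.mul_apply, Fin.sum_univ_four, hDdef,
          Matrix.cons_val_two, Matrix.cons_val_three, Matrix.vecHead, Matrix.vecTail];
         try ring)
    have hP3 : (!![-y,x,0,-D;-w,y,D,0;0,0,D*y,D*w;0,0,-(D*x),-(D*y)] : Matrix (Fin 4) (Fin 4) ℚ_[p]) *
        !![-1,0,0,0; 0,-1,0,0; -(w/D), y/D, -1, 0; y/D, -(x/D), 0, -1]
        = !![0,0,0,D;0,0,-D,0;0,-D,-(D*y),-(D*w);D,0,D*x,D*y] := by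
      ext i j
      fin_cases i <;> fin_cases j <;>
        (simp [Matrix.mul_apply, Fin.sum_univ_four,
          Matrix.cons_val_two, Matrix.cons_val_three, Matrix.vecHead, Matrix.vecTail];
         try (field_simp; try ring))
    rw [hdet, hT, Matrix.mul_smul, mul_one, Matrix.smul_mul, Matrix.smul_mul, Matrix.smul_mul,
      hP1, hP2, hP3]
    ext i j
    fin_cases i <;> fin_cases j <;>
      (simp [wsMat, nMat, Matrix.mul_apply, Fin.sum_univ_four, smul_eq_mul,
        Matrix.cons_val_two, Matrix.cons_val_three, Matrix.vecHead, Matrix.vecTail];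
       try field_simp)
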